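/- Let $k$ be a field of characteristic $p > 0$. In the Jordan plane $J = k\langle x, y \mid yx - xy = y^2 \rangle$, the elements $x^p$ and $y^p$ are central. -/

import Mathlib

/-- The defining relation `y * x = x * y + y²` of the Jordan plane, as a relation on
the free algebra on two generators. -/
def jordanRel (k : Type*) [Field k] :
    FreeAlgebra k (Fin 2) → FreeAlgebra k (Fin 2) → Prop :=
  fun a b =>
    a = FreeAlgebra.ι k (1 : Fin 2) * FreeAlgebra.ι k (0 : Fin 2) ∧
    b = FreeAlgebra.ι k (0 : Fin 2) * FreeAlgebra.ι k (1 : Fin 2) +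
        FreeAlgebra.ι k (1 : Fin 2) ^ 2

/-- The Jordan plane `J = k⟨x, y⟩/(yx - xy - y²)`. -/
abbrev JordanPlane (k : Type*) [Field k] : Type _ := RingQuot (jordanRel k)

/-- Over a field of characteristic `p > 0`, the elements `x^p` and
`y^p` are central in the Jordan plane `k⟨x, y | yx - xy = y²⟩`. -/
theorem jordan_pow_central_char_p
    {k : Type*} [Field k] (p : ℕ) [CharP k p] (hp : 0 < p) :
    let x : JordanPlane k :=
      RingQuot.mkAlgHom k (jordanRel k) (FreeAlgebra.ι k (0 : Fin 2))
    let y : JordanPlane k :=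
      RingQuot.mkAlgHom k (jordanRel k) (FreeAlgebra.ι k (1 : Fin 2))
    ∀ a : JordanPlane k, x ^ p * a = a * x ^ p ∧ y ^ p * a = a * y ^ p := by
  intro x y
  haveI : NeZero p := ⟨hp.ne'⟩
  haveI hfp : Fact p.Prime := CharP.char_is_prime_of_pos k p
  -- the defining relation
  have hrel : y * x = x * y + y ^ 2 := by
    have h := RingQuot.mkAlgHom_rel k (s := jordanRel k)
      (x := FreeAlgebra.ι k (1 : Fin 2) * FreeAlgebra.ι k (0 : Fin 2))
      (y := FreeAlgebra.ι k (0 : Fin 2) * FreeAlgebra.ι k (1 : Fin 2) +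
        FreeAlgebra.ι k (1 : Fin 2) ^ 2) ⟨rfl, rfl⟩
    simpa [map_mul, map_add, map_pow] using h
  -- commutation of x past powers of y
  have hym : ∀ m : ℕ, y ^ m * x = x * y ^ m + (m : k) • y ^ (m + 1) := by
    intro m
    induction m with
    | zero => simp
    | succ n ih =>
      have e2 : y ^ (n + 1 + 1) = y ^ n * y ^ 2 := by
        rw [show n + 1 + 1 = n + 2 from rfl, pow_add]
      have hns : ((n + 1 : ℕ) : k) • y ^ (n + 1 + 1) =
          (n : k) • y ^ (n + 1 + 1) + y ^ (n + 1 + 1) := by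
        push_cast
        rw [add_smul, one_smul]
      calc y ^ (n + 1) * x = y ^ n * (y * x) := by rw [pow_succ, mul_assoc]
        _ = y ^ n * (x * y) + y ^ n * y ^ 2 := by rw [hrel, mul_add]
        _ = (x * y ^ n + (n : k) • y ^ (n + 1)) * y + y ^ n * y ^ 2 := by
            rw [← mul_assoc, ih]
        _ = x * y ^ (n + 1) + (n : k) • y ^ (n + 1 + 1) + y ^ (n + 1 + 1) := by
            rw [add_mul, smul_mul_assoc, mul_assoc, ← pow_succ, ← pow_succ, e2]
        _ = x * y ^ (n + 1) + ((n + 1 : ℕ) : k) • y ^ (n + 1 + 1) := by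
            rw [hns, add_assoc]
  -- y^p commutes with x
  have hypx : y ^ p * x = x * y ^ p := by
    rw [hym p, CharP.cast_eq_zero k p, zero_smul, add_zero]
  -- every element that commutes with x and y is central
  have central : ∀ z : JordanPlane k, z * x = x * z → z * y = y * z →
      ∀ a : JordanPlane k, z * a = a * z := by
    intro z hzx hzy a
    obtain ⟨b, rfl⟩ := RingQuot.mkAlgHom_surjective k (jordanRel k) a
    induction b using FreeAlgebra.induction with
    | grade0 r => simp [AlgHom.commutes, Algebra.commutes]
    | grade1 i =>
      fin_cases i
      · exact hzx
      · exact hzy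
    | mul u v hu hv => rw [map_mul, ← mul_assoc, hu, mul_assoc, hv, mul_assoc]
    | add u v hu hv => rw [map_add, mul_add, add_mul, hu, hv]
  refine fun a => ⟨?_, ?_⟩
  · -- x ^ p is central; first show it commutes with y, via iterated commutators
    rcases subsingleton_or_nontrivial (JordanPlane k) with hA | hA
    · exact Subsingleton.elim _ _
    · haveI : CharP (JordanPlane k) p :=
        charP_of_injective_algebraMap (algebraMap k (JordanPlane k)).injective p
      haveI : CharP (Module.End k (JordanPlane k)) p :=
        charP_of_injective_ringHom
          (f := (Algebra.lmul k (JordanPlane k)).toRingHom) Algebra.lmul_injective p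
      set L := LinearMap.mulLeft k x with hL
      set R := LinearMap.mulRight k x with hR
      have hcomm : Commute L R := LinearMap.commute_mulLeft_right x x
      have hdp : (L - R) ^ p = L ^ p - R ^ p := sub_pow_char_of_commute (R := Module.End k (JordanPlane k)) p hcomm
      -- compute (L - R)^m y
      have had : ∀ m : ℕ, ((L - R) ^ m) y = (((-1 : k) ^ m * m.factorial : k)) • y ^ (m + 1) := by
        intro m
        induction m with
        | zero => simp
        | succ n ih =>
          rw [pow_succ', Module.End.mul_apply, ih, map_smul]
          have hd : (L - R) (y ^ (n + 1)) = (-((n + 1 : ℕ) : k)) • y ^ (n + 1 + 1) := by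
            rw [LinearMap.sub_apply, hL, hR, LinearMap.mulLeft_apply,
              LinearMap.mulRight_apply, hym (n + 1), sub_add_cancel_left]
            exact (neg_smul (((n : ℕ) + 1 : ℕ) : k) (y ^ (n + 1 + 1))).symm
          rw [hd, smul_smul]
          congr 1
          push_cast [Nat.factorial_succ]
          ring
      have hfac : ((p.factorial : k)) = 0 := by
        have : (p : ℕ) ∣ p.factorial := Nat.dvd_factorial hp le_rfl
        exact (CharP.cast_eq_zero_iff k p _).mpr this
      have hzero : ((L - R) ^ p) y = 0 := by
        rw [had p, hfac, mul_zero, zero_smul]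
      have hxy : x ^ p * y = y * x ^ p := by
        have := hzero
        rw [hdp, LinearMap.sub_apply, hL, hR, LinearMap.pow_mulLeft, LinearMap.pow_mulRight,
          LinearMap.mulLeft_apply, LinearMap.mulRight_apply, sub_eq_zero] at this
        exact this
      exact central (x ^ p) (Commute.self_pow x p).symm hxy a
  · exact central (y ^ p) hypx (Commute.self_pow y p).symm a
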